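/- Let Q be a compact set in ℝⁿ and let E₁, …, E_r be closed sets covering an open set N ⊆ ℝ^m. Suppose l : N → ℝ is a function and l₁, …, l_r : N → ℝ are C¹ functions such that l = lᵢ on Eᵢ for each i, and such that at every point p lying in Eᵢ ∩ E_j the differentials satisfy dlᵢ(p) = dl_j(p). Then l is C¹ on N, with dl(p) = dlᵢ(p) for p ∈ Eᵢ. -/

import Mathlib

/-- Gluing lemma for C¹ functions: if an open set `N ⊆ ℝ^m` is the union of finitely
many relatively closed sets `E i`, `l` agrees on each `E i` with a C¹ function `li i`,
and the differentials of the `li` agree on overlaps, then `l` is C¹ on `N` with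
differential `d(li i)` on `E i`. -/
theorem stmt_18 {m : ℕ} (r : ℕ) (N : Set (EuclideanSpace ℝ (Fin m)))
    (hN : IsOpen N)
    (E : Fin r → Set (EuclideanSpace ℝ (Fin m)))
    (hE_sub : ∀ i, E i ⊆ N)
    (hE_closed : ∀ i, IsClosed {x : N | (x : EuclideanSpace ℝ (Fin m)) ∈ E i})
    (hcover : N = ⋃ i, E i)
    (l : EuclideanSpace ℝ (Fin m) → ℝ)
    (li : Fin r → EuclideanSpace ℝ (Fin m) → ℝ)
    (hli : ∀ i, ContDiffOn ℝ 1 (li i) N)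
    (heq : ∀ i, Set.EqOn l (li i) (E i))
    (hd : ∀ i j, ∀ p ∈ E i ∩ E j, fderiv ℝ (li i) p = fderiv ℝ (li j) p) :
    ContDiffOn ℝ 1 l N ∧ ∀ i, ∀ p ∈ E i, fderiv ℝ l p = fderiv ℝ (li i) p := by
  -- If `p ∈ N` and `p ∉ E j`, then `x ∉ E j` for `x` near `p`.
  have hloc : ∀ p ∈ N, ∀ j, p ∉ E j → ∀ᶠ x in nhds p, x ∉ E j := by
    intro p hp j hpj
    obtain ⟨U, hU, hUeq⟩ := isOpen_induced_iff.1 (hE_closed j).isOpen_compl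
    have hpU : p ∈ U := by
      have : (⟨p, hp⟩ : N) ∈ Subtype.val ⁻¹' U := by rw [hUeq]; exact hpj
      exact this
    filter_upwards [hU.mem_nhds hpU, hN.mem_nhds hp] with x hxU hxN
    intro hxE
    have hmem : (⟨x, hxN⟩ : N) ∈ Subtype.val ⁻¹' U := hxU
    rw [hUeq] at hmem
    exact hmem hxE
  -- Near any `p ∈ N`, every point lies in some `E j` containing `p`.
  have hgood : ∀ p ∈ N, ∀ᶠ x in nhds p, ∃ j, p ∈ E j ∧ x ∈ E j := by
    intro p hp
    have h1 : ∀ᶠ x in nhds p, ∀ j, p ∉ E j → x ∉ E j := by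
      rw [Filter.eventually_all]
      intro j
      by_cases hpj : p ∈ E j
      · exact Filter.Eventually.of_forall fun x h => absurd hpj h
      · filter_upwards [hloc p hp j hpj] with x hx _; exact hx
    filter_upwards [h1, hN.mem_nhds hp] with x hx hxN
    obtain ⟨j, hxj⟩ := Set.mem_iUnion.1 (hcover ▸ hxN)
    exact ⟨j, by_contra fun h => hx j h hxj, hxj⟩
  -- The key derivative computation.
  have key : ∀ i, ∀ p ∈ E i, HasFDerivAt l (fderiv ℝ (li i) p) p := by
    intro i p hpi
    have hpN := hE_sub i hpi
    set D := fderiv ℝ (li i) p with hD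
    have hderiv : ∀ j, p ∈ E j → HasFDerivAt (li j) D p := by
      intro j hpj
      have hdiff : DifferentiableAt ℝ (li j) p :=
        ((hli j).contDiffAt (hN.mem_nhds hpN)).differentiableAt one_ne_zero
      have h := hdiff.hasFDerivAt
      rwa [hd j i p ⟨hpj, hpi⟩] at h
    rw [hasFDerivAt_iff_isLittleO, Asymptotics.isLittleO_iff]
    intro c hc
    have hall : ∀ᶠ x in nhds p, ∀ j, p ∈ E j →
        ‖li j x - li j p - D (x - p)‖ ≤ c * ‖x - p‖ := by
      rw [Filter.eventually_all]
      intro j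
      by_cases hpj : p ∈ E j
      · have h := hderiv j hpj
        rw [hasFDerivAt_iff_isLittleO] at h
        rw [Asymptotics.isLittleO_iff] at h
        filter_upwards [h hc] with x hx _; exact hx
      · exact Filter.Eventually.of_forall fun x h => absurd h hpj
    filter_upwards [hall, hgood p hpN] with x hx hx2
    obtain ⟨j, hpj, hxj⟩ := hx2
    rw [heq j hxj, heq j hpj]
    exact hx j hpj
  have hfd : ∀ i, ∀ p ∈ E i, fderiv ℝ l p = fderiv ℝ (li i) p :=
    fun i p hp => (key i p hp).fderiv
  have hdiffOn : DifferentiableOn ℝ l N := by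
    intro p hp
    obtain ⟨i, hpi⟩ := Set.mem_iUnion.1 (hcover ▸ hp)
    exact ((key i p hpi).differentiableAt).differentiableWithinAt
  have hcont : ContinuousOn (fderiv ℝ l) N := by
    intro p hp
    apply ContinuousAt.continuousWithinAt
    obtain ⟨i, hpi⟩ := Set.mem_iUnion.1 (hcover ▸ hp)
    rw [ContinuousAt, Metric.tendsto_nhds]
    intro ε hε
    have hall : ∀ᶠ x in nhds p, ∀ j, p ∈ E j →
        dist (fderiv ℝ (li j) x) (fderiv ℝ (li j) p) < ε := by
      rw [Filter.eventually_all]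
      intro j
      by_cases hpj : p ∈ E j
      · have hcj : ContinuousAt (fderiv ℝ (li j)) p :=
          ((hli j).continuousOn_fderiv_of_isOpen hN le_rfl).continuousAt (hN.mem_nhds hp)
        filter_upwards [(Metric.tendsto_nhds.1 hcj) ε hε] with x hx _; exact hx
      · exact Filter.Eventually.of_forall fun x h => absurd h hpj
    filter_upwards [hall, hgood p hp] with x hx hx2
    obtain ⟨j, hpj, hxj⟩ := hx2
    rw [hfd j x hxj]
    have heqp : fderiv ℝ (li j) p = fderiv ℝ l p := by
      rw [hfd i p hpi, hd j i p ⟨hpj, hpi⟩]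
    rw [← heqp]
    exact hx j hpj
  refine ⟨?_, hfd⟩
  rw [show (1 : WithTop ℕ∞) = 0 + 1 from rfl, contDiffOn_succ_iff_fderiv_of_isOpen hN]
  exact ⟨hdiffOn, fun h => by simp at h, contDiffOn_zero.2 hcont⟩
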